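/- There are precisely seven Euclidean consonant musical intervals, namely the minor third [5/6], the major third [4/5], the fourth [3/4], the fifth [2/3], the minor sixth [5/8], the major sixth [3/5], and the octave [1/2]. That is, the set of Euclidean consonants equals {[5/6], [4/5], [3/4], [2/3], [5/8], [3/5], [1/2]} ⊂ 𝔖. -/

import Mathlib

/-- The positive rational numbers ℚ₊. -/
abbrev Qpos := {q : ℚ // 0 < q}

/-- Octave equivalence on ℚ₊: `q₁ ∼ q₂` iff `q₁ = 2^n * q₂` for some `n ∈ ℤ`. -/
def octaveRel (q₁ q₂ : Qpos) : Prop := ∃ n : ℤ, (q₁ : ℚ) = 2 ^ n * (q₂ : ℚ)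

/-- The group of musical intervals `𝔖 = ℚ₊/∼`. -/
def MusInt := Quot octaveRel

/-- The musical interval `[q]` represented by a positive rational `q`. -/
def cls (q : ℚ) (h : 0 < q) : MusInt := Quot.mk octaveRel ⟨q, h⟩

/-- The octave `𝔬 = [1/2]`. -/
def octave : MusInt := cls (1/2) (by norm_num)

/-- `repSpec σ (m, n)` says that `(m, n)` is a reduced representative of `σ`,
i.e. `σ = [m/n]`, `1/2 ≤ m/n < 1` and `gcd(n, m) = 1`. -/
def repSpec (σ : MusInt) (p : ℕ × ℕ) : Prop :=
  ∃ h : (0 : ℚ) < (p.1 : ℚ) / (p.2 : ℚ),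
    σ = cls ((p.1 : ℚ) / (p.2 : ℚ)) h ∧
    (1 : ℚ) / 2 ≤ (p.1 : ℚ) / (p.2 : ℚ) ∧ (p.1 : ℚ) / (p.2 : ℚ) < 1 ∧
    Nat.gcd p.2 p.1 = 1

open Classical in
/-- The canonical reduced representative `(m_σ, n_σ)` of a musical interval. -/
noncomputable def rep (σ : MusInt) : ℕ × ℕ :=
  if h : ∃ p, repSpec σ p then h.choose else (1, 2)

/-- The numerator `m_σ`, so that `σ = [m_σ/n_σ]`. -/
noncomputable def mVal (σ : MusInt) : ℕ := (rep σ).1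

/-- The map `𝒩`, sending `σ` to the denominator `n_σ`, so that `σ = [m_σ/n_σ]`. -/
noncomputable def nVal (σ : MusInt) : ℕ := (rep σ).2

/-- The Kepler map `K(σ) = [(n_σ - m_σ)/m_σ]`. -/
noncomputable def kepler (σ : MusInt) : MusInt :=
  if h : (0 : ℚ) < ((nVal σ : ℚ) - (mVal σ : ℚ)) / (mVal σ : ℚ) then
    cls (((nVal σ : ℚ) - (mVal σ : ℚ)) / (mVal σ : ℚ)) h
  else octave

/-- The height `𝔥(σ) = min {ℓ ∈ ℕ₀ : K^ℓ(σ) = 𝔬}`. -/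
noncomputable def height (σ : MusInt) : ℕ := sInf {ℓ : ℕ | kepler^[ℓ] σ = octave}

/-- `n` is an Euclidean Gauss–Wantzel number: `n = 2^k * 3^l * 5^m` with
`l, m ∈ {0, 1}` and `n > 1`. -/
def IsEuclidean (n : ℕ) : Prop :=
  1 < n ∧ ∃ k l m : ℕ, (l = 0 ∨ l = 1) ∧ (m = 0 ∨ m = 1) ∧ n = 2 ^ k * 3 ^ l * 5 ^ m

/-- `p` is a Fermat prime: a prime of the form `2^(2^n) + 1`. -/
def IsFermatPrime (p : ℕ) : Prop := p.Prime ∧ ∃ n : ℕ, p = 2 ^ (2 ^ n) + 1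

/-- `n` is a Gauss–Wantzel number: `n > 1` is a power of `2` times a product of
distinct Fermat primes. -/
def IsGaussWantzel (n : ℕ) : Prop :=
  1 < n ∧ ∃ (k : ℕ) (s : Finset ℕ), (∀ p ∈ s, IsFermatPrime p) ∧ n = 2 ^ k * ∏ p ∈ s, p

/-- `σ` is Euclidean consonant: all members of its second Kepler sequence are
Euclidean Gauss–Wantzel numbers. -/
def EuclideanConsonant (σ : MusInt) : Prop :=
  ∀ j ≤ height σ, IsEuclidean (nVal (kepler^[j] σ))

/-- `σ` is Gaussian consonant: all members of its second Kepler sequence are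
Gauss–Wantzel numbers. -/
def GaussianConsonant (σ : MusInt) : Prop :=
  ∀ j ≤ height σ, IsGaussWantzel (nVal (kepler^[j] σ))

-- ## infrastructure

lemma octaveRel_equiv : Equivalence octaveRel := by
  constructor
  · intro x; exact ⟨0, by simp⟩
  · rintro x y ⟨n, h⟩
    exact ⟨-n, by rw [h]; rw [← mul_assoc, ← zpow_add₀ (by norm_num : (2:ℚ) ≠ 0)]; simp⟩
  · rintro x y z ⟨n, h⟩ ⟨m, h'⟩
    exact ⟨n + m, by rw [h, h', ← mul_assoc, ← zpow_add₀ (by norm_num : (2:ℚ) ≠ 0)]⟩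

lemma cls_eq_cls_iff {q q' : ℚ} (h : 0 < q) (h' : 0 < q') :
    cls q h = cls q' h' ↔ ∃ n : ℤ, q = 2 ^ n * q' := by
  rw [cls, cls]
  exact (Quot.eq (r := octaveRel)).trans octaveRel_equiv.eqvGen_iff

lemma nat_pos_of_cast_div_pos {m n : ℕ} (h : (0:ℚ) < (m:ℚ)/(n:ℚ)) : 0 < m ∧ 0 < n := by
  constructor
  · by_contra hm
    push_neg at hm
    interval_cases m
    simp at h
  · by_contra hn
    push_neg at hn
    interval_cases n
    simp at h

lemma repSpec_unique {σ : MusInt} {p p' : ℕ × ℕ} (h : repSpec σ p) (h' : repSpec σ p') :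
    p = p' := by
  obtain ⟨m, n⟩ := p
  obtain ⟨m', n'⟩ := p'
  obtain ⟨hpos, hcls, hle, hlt, hgcd⟩ := h
  obtain ⟨hpos', hcls', hle', hlt', hgcd'⟩ := h'
  simp only at *
  rw [hcls] at hcls'
  rw [cls_eq_cls_iff] at hcls'
  obtain ⟨a, ha⟩ := hcls'
  obtain ⟨hm, hn⟩ := nat_pos_of_cast_div_pos hpos
  obtain ⟨hm', hn'⟩ := nat_pos_of_cast_div_pos hpos'
  have hnQ : (0:ℚ) < n := by exact_mod_cast hn
  have hnQ' : (0:ℚ) < n' := by exact_mod_cast hn'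
  have h2pos : (0:ℚ) < 2 ^ a := zpow_pos (by norm_num) a
  have ha0 : a = 0 := by
    have hub : (2:ℚ) ^ a < 2 ^ (1:ℤ) := by
      rw [zpow_one]
      nlinarith [hpos', hle', hlt, ha, hpos]
    have hlb : (2:ℚ) ^ (-1:ℤ) < 2 ^ a := by
      rw [zpow_neg_one]
      nlinarith [hpos', hle, hlt', ha, hpos]
    have h1 : a < 1 := (zpow_lt_zpow_iff_right₀ (by norm_num : (1:ℚ) < 2)).mp hub
    have h2 : (-1:ℤ) < a := (zpow_lt_zpow_iff_right₀ (by norm_num : (1:ℚ) < 2)).mp hlb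
    omega
  rw [ha0, zpow_zero, one_mul] at ha
  have hcross : m * n' = m' * n := by
    have : (m:ℚ) * n' = (m':ℚ) * n := by
      field_simp at ha
      linarith [ha]
    exact_mod_cast this
  have h1 : n ∣ n' := Nat.Coprime.dvd_of_dvd_mul_right hgcd
    ⟨m', by rw [Nat.mul_comm n' m, hcross, Nat.mul_comm]⟩
  have h2 : n' ∣ n := Nat.Coprime.dvd_of_dvd_mul_right hgcd'
    ⟨m, by rw [Nat.mul_comm n m', ← hcross, Nat.mul_comm]⟩
  have hnn : n = n' := Nat.dvd_antisymm h1 h2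
  subst hnn
  have : m = m' := Nat.eq_of_mul_eq_mul_right hn hcross
  simp [this]

lemma repSpec_exists (σ : MusInt) : ∃ p, repSpec σ p := by
  induction σ using Quot.ind with
  | _ q =>
    obtain ⟨q, hq⟩ := q
    obtain ⟨n, hn1, hn2⟩ := exists_mem_Ico_zpow (x := q) (y := 2) hq (by norm_num)
    set r : ℚ := 2 ^ (-(n+1)) * q with hr
    have hrpos : 0 < r := by positivity
    have h2 : (0:ℚ) < 2 ^ (n+1) := zpow_pos (by norm_num) _
    have hrlb : 1/2 ≤ r := by
      rw [hr, zpow_neg, inv_mul_eq_div, le_div_iff₀ h2]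
      have h3 : (1:ℚ)/2 * 2^(n+1) = 2^n := by
        rw [zpow_add₀ (by norm_num : (2:ℚ) ≠ 0)]; ring
      rw [h3]; exact hn1
    have hrub : r < 1 := by
      rw [hr, zpow_neg, inv_mul_eq_div, div_lt_one h2]
      exact hn2
    refine ⟨(r.num.toNat, r.den), ?_⟩
    have hnum : (r.num.toNat : ℚ) = (r.num : ℚ) := by
      have : 0 < r.num := Rat.num_pos.mpr hrpos
      exact_mod_cast congrArg (fun z : ℤ => (z : ℚ)) (Int.toNat_of_nonneg this.le)
    have hval : ((r.num.toNat : ℚ)) / ((r.den : ℚ)) = r := by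
      rw [hnum]; exact Rat.num_div_den r
    refine ⟨by simpa [hval] using hrpos, ?_, by simpa [hval] using hrlb,
      by simpa [hval] using hrub, ?_⟩
    · show Quot.mk _ _ = cls _ _
      rw [cls]
      apply Quot.sound
      refine ⟨n+1, ?_⟩
      show q = 2 ^ (n+1) * ((r.num.toNat : ℚ) / (r.den : ℚ))
      rw [hval, hr, ← mul_assoc, ← zpow_add₀ (by norm_num : (2:ℚ) ≠ 0),
        show n+1+(-(n+1)) = 0 by ring, zpow_zero, one_mul]
    · show Nat.gcd r.den r.num.toNat = 1
      rw [Nat.gcd_comm]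
      have h4 := r.reduced
      have h5 : 0 ≤ r.num := (Rat.num_pos.mpr hrpos).le
      rwa [show r.num.toNat = r.num.natAbs by omega]

lemma rep_spec (σ : MusInt) : repSpec σ (rep σ) := by
  rw [rep, dif_pos (repSpec_exists σ)]
  exact (repSpec_exists σ).choose_spec

lemma rep_eq {σ : MusInt} {p : ℕ × ℕ} (h : repSpec σ p) : rep σ = p :=
  repSpec_unique (rep_spec σ) h

lemma cls_congr {q q' : ℚ} (h : 0 < q) (h' : 0 < q') (hqq : q = q') :
    cls q h = cls q' h' := by subst hqq; rfl

lemma rep_of {q : ℚ} {hq : 0 < q} {m n : ℕ} (hval : (m:ℚ)/(n:ℚ) = q)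
    (h1 : (1:ℚ)/2 ≤ q) (h2 : q < 1) (h3 : Nat.gcd n m = 1) :
    rep (cls q hq) = (m, n) := by
  apply rep_eq
  exact ⟨by rw [hval]; exact hq, cls_congr _ _ hval.symm, by rw [hval]; exact h1,
    by rw [hval]; exact h2, h3⟩

lemma rep_prop (σ : MusInt) :
    0 < mVal σ ∧ mVal σ < nVal σ ∧ nVal σ ≤ 2 * mVal σ ∧
      Nat.gcd (nVal σ) (mVal σ) = 1 ∧
      ∃ h : (0:ℚ) < (mVal σ : ℚ) / (nVal σ : ℚ), σ = cls _ h := by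
  obtain ⟨hpos, hcls, hle, hlt, hgcd⟩ := rep_spec σ
  obtain ⟨hm, hn⟩ := nat_pos_of_cast_div_pos hpos
  have hnQ : (0:ℚ) < ((rep σ).2 : ℚ) := by exact_mod_cast hn
  have hmn : mVal σ < nVal σ := by
    have := (div_lt_one hnQ).mp hlt
    exact_mod_cast this
  have h2m : nVal σ ≤ 2 * mVal σ := by
    rw [div_le_div_iff₀ (by norm_num) hnQ] at hle
    have : ((rep σ).2 : ℚ) ≤ 2 * (rep σ).1 := by linarith
    exact_mod_cast this
  exact ⟨hm, hmn, h2m, hgcd, hpos, hcls⟩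

lemma kepler_of {σ : MusInt} {m n : ℕ} (h : rep σ = (m, n)) (hm : 0 < m)
    (hmn : m < n) :
    ∃ hp : (0:ℚ) < ((n:ℚ) - (m:ℚ))/(m:ℚ), kepler σ = cls (((n:ℚ) - (m:ℚ))/(m:ℚ)) hp := by
  have hmQ : (0:ℚ) < (m:ℚ) := by exact_mod_cast hm
  have hs : (0:ℚ) < (n:ℚ) - (m:ℚ) := by
    have : (m:ℚ) < (n:ℚ) := by exact_mod_cast hmn
    linarith
  have hp : (0:ℚ) < ((n:ℚ) - (m:ℚ))/(m:ℚ) := div_pos hs hmQ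
  refine ⟨hp, ?_⟩
  rw [kepler]
  have hmv : mVal σ = m := by rw [mVal, h]
  have hnv : nVal σ = n := by rw [nVal, h]
  rw [hmv, hnv, dif_pos hp]

lemma nVal_eq_two_iff {σ : MusInt} : nVal σ = 2 ↔ σ = octave := by
  constructor
  · intro h
    obtain ⟨hm, hmn, h2m, hgcd, hpos, hcls⟩ := rep_prop σ
    have hm1 : mVal σ = 1 := by omega
    rw [hcls, octave]
    apply cls_congr
    rw [hm1, h]; norm_num
  · intro h
    subst h
    have : rep octave = (1, 2) := rep_of (by norm_num) (by norm_num) (by norm_num) (by norm_num)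
    rw [nVal, this]

lemma qdiv_eq {d m u w : ℕ} (hm : 0 < m) (hw : 0 < w) {a : ℤ}
    (h : (d:ℚ)/(m:ℚ) = 2^a * ((u:ℚ)/(w:ℚ))) :
    (0 ≤ a → d * w = 2^(a.toNat) * u * m) ∧ (a ≤ 0 → 2^((-a).toNat) * d * w = u * m) := by
  have hmQ : ((m:ℚ)) ≠ 0 := by positivity
  have hwQ : ((w:ℚ)) ≠ 0 := by positivity
  have h2 : (d:ℚ) * w = 2^a * u * m := by
    field_simp at h
    linarith [h]
  constructor
  · intro ha
    have hcast : (2:ℚ)^a = ((2^(a.toNat) : ℕ) : ℚ) := by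
      push_cast
      rw [← zpow_natCast]
      congr 1
      omega
    rw [hcast] at h2
    exact_mod_cast h2
  · intro ha
    have hne : (2:ℚ) ≠ 0 := by norm_num
    have h3 : (2:ℚ)^((-a).toNat) * ((d:ℚ) * w) = 2^((-a).toNat) * (2^a * u * m) := by
      rw [h2]
    have hcast : (2:ℚ)^((-a).toNat) * 2^a = 1 := by
      rw [← zpow_natCast (2:ℚ) (-a).toNat, ← zpow_add₀ hne]
      rw [show ((-a).toNat : ℤ) + a = 0 by omega]
      exact zpow_zero 2
    have h4 : (2:ℚ)^((-a).toNat) * d * w = (u:ℚ) * m := by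
      calc (2:ℚ)^((-a).toNat) * d * w = 2^((-a).toNat) * (d * w) := by ring
        _ = 2^((-a).toNat) * (2^a * u * m) := h3
        _ = (2^((-a).toNat) * 2^a) * (u * m) := by ring
        _ = (u:ℚ) * m := by rw [hcast]; ring
    exact_mod_cast h4

lemma kepler_form {σ : MusInt} (hσ : σ ≠ octave) :
    ∃ (d m : ℕ) (hp : (0:ℚ) < (d:ℚ)/(m:ℚ)),
      kepler σ = cls ((d:ℚ)/(m:ℚ)) hp ∧ 0 < d ∧ d < m ∧ Nat.gcd d m = 1 ∧
      nVal σ = d + m ∧ mVal σ = m := by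
  obtain ⟨hm, hmn, h2m, hgcd, hpos, hcls⟩ := rep_prop σ
  set m := mVal σ
  set n := nVal σ
  have hne : n ≠ 2 * m := by
    intro hcontra
    have : Nat.gcd n m = m := by rw [hcontra]; simp [Nat.gcd_comm, Nat.gcd_mul_left]
    have hm1 : m = 1 := by omega
    have hn2 : n = 2 := by omega
    exact hσ (nVal_eq_two_iff.mp hn2)
  have hdm : n - m < m := by omega
  obtain ⟨hp, hk⟩ := kepler_of (show rep σ = (m, n) from rfl) hm hmn
  refine ⟨n - m, m, ?_, ?_, by omega, hdm, ?_, by omega, rfl⟩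
  · have : ((n - m : ℕ) : ℚ) = (n:ℚ) - (m:ℚ) := by
      push_cast [Nat.cast_sub hmn.le]; ring
    rw [this]; exact hp
  · rw [hk]
    apply cls_congr
    congr 1
    push_cast [Nat.cast_sub hmn.le]; ring
  · exact (Nat.coprime_sub_self_left hmn.le).mpr hgcd

lemma nVal_kepler_le {σ : MusInt} (hσ : σ ≠ octave) : nVal (kepler σ) ≤ mVal σ := by
  obtain ⟨d, m, hp, hk, hd, hdm, hgcd, hn, hm⟩ := kepler_form hσ
  obtain ⟨hpos', hcls', hle', hlt', hgcd'⟩ := rep_spec (kepler σ)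
  obtain ⟨hm', hn'⟩ := nat_pos_of_cast_div_pos hpos'
  obtain ⟨a, ha⟩ := (cls_eq_cls_iff _ _).mp (hk.symm.trans hcls')
  have hmQ : (0:ℚ) < (m:ℚ) := by
    have : 0 < m := by omega
    exact_mod_cast this
  have hdmQ : (d:ℚ)/(m:ℚ) < 1 := by
    rw [div_lt_one hmQ]
    exact_mod_cast hdm
  have ha0 : a ≤ 0 := by
    by_contra hcon
    push_neg at hcon
    have h2 : (2:ℚ)^(1:ℤ) ≤ 2^a := zpow_le_zpow_right₀ (by norm_num) (by omega)
    rw [zpow_one] at h2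
    have hprod : (1:ℚ) ≤ 2^a * (((rep (kepler σ)).1:ℚ)/((rep (kepler σ)).2:ℚ)) := by
      calc (1:ℚ) = 2 * (1/2) := by norm_num
        _ ≤ _ := mul_le_mul h2 hle' (by norm_num) (by positivity)
    rw [← ha] at hprod
    linarith
  have key := (qdiv_eq (show 0 < m by omega) hn' ha).2 ha0
  have hdvd : (rep (kepler σ)).2 ∣ m := by
    have h1 : (rep (kepler σ)).2 ∣ (rep (kepler σ)).1 * m :=
      ⟨2^((-a).toNat) * d, by rw [← key]; ring⟩
    exact Nat.Coprime.dvd_of_dvd_mul_left hgcd' h1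
  have : (rep (kepler σ)).2 ≤ m := Nat.le_of_dvd (by omega) hdvd
  show (rep (kepler σ)).2 ≤ mVal σ
  omega

lemma two_le_nVal (σ : MusInt) : 2 ≤ nVal σ := by
  obtain ⟨hm, hmn, _⟩ := rep_prop σ
  omega

lemma nVal_kepler_lt {σ : MusInt} (hσ : σ ≠ octave) : nVal (kepler σ) < nVal σ := by
  have h1 := nVal_kepler_le hσ
  obtain ⟨hm, hmn, _⟩ := rep_prop σ
  omega

lemma exists_iterate_octave (σ : MusInt) : ∃ ℓ, kepler^[ℓ] σ = octave := by
  generalize hN : nVal σ = N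
  induction N using Nat.strong_induction_on generalizing σ with
  | _ N ih =>
    by_cases hσ : σ = octave
    · exact ⟨0, hσ⟩
    · obtain ⟨ℓ, hℓ⟩ := ih (nVal (kepler σ)) (hN ▸ nVal_kepler_lt hσ) (kepler σ) rfl
      exact ⟨ℓ + 1, by rwa [Function.iterate_succ_apply]⟩

lemma height_iterate (σ : MusInt) : kepler^[height σ] σ = octave :=
  Nat.sInf_mem (exists_iterate_octave σ)

lemma height_octave : height octave = 0 :=
  Nat.sInf_eq_zero.mpr (Or.inl rfl)

lemma height_succ {σ : MusInt} (hσ : σ ≠ octave) :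
    height σ = height (kepler σ) + 1 := by
  apply IsLeast.csInf_eq
  constructor
  · show kepler^[height (kepler σ) + 1] σ = octave
    rw [Function.iterate_succ_apply]
    exact height_iterate (kepler σ)
  · rintro b hb
    match b with
    | 0 => exact absurd hb hσ
    | j + 1 =>
      rw [Set.mem_setOf_eq, Function.iterate_succ_apply] at hb
      have : height (kepler σ) ≤ j := Nat.sInf_le (Set.mem_setOf_eq ▸ hb)
      omega

lemma consonant_iff {σ : MusInt} (hσ : σ ≠ octave) :
    EuclideanConsonant σ ↔ IsEuclidean (nVal σ) ∧ EuclideanConsonant (kepler σ) := by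
  rw [EuclideanConsonant, EuclideanConsonant, height_succ hσ]
  constructor
  · intro h
    refine ⟨h 0 (by omega), fun j hj => ?_⟩
    have := h (j+1) (by omega)
    rwa [Function.iterate_succ_apply] at this
  · rintro ⟨h0, h⟩ j hj
    match j with
    | 0 => exact h0
    | i + 1 =>
      rw [Function.iterate_succ_apply]
      exact h i (by omega)

lemma coprime_two_pow_of_odd {w : ℕ} (hw : Odd w) (k : ℕ) : w.Coprime (2^k) := by
  apply Nat.Coprime.pow_right
  have hodd := Nat.odd_iff.mp hw
  have : ¬ (2 ∣ w) := by omega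
  exact Nat.coprime_comm.mp ((Nat.prime_two.coprime_iff_not_dvd).mpr this)

lemma nt_lemma {u w d m : ℕ} (hu : Odd u) (hw : Odd w) (huw : Nat.gcd u w = 1)
    (hdm : Nat.gcd d m = 1) (hd : 0 < d) (hm : 0 < m) {a : ℤ}
    (h : (d:ℚ)/(m:ℚ) = 2^a * ((u:ℚ)/(w:ℚ))) :
    (∃ s, d = 2^s * u ∧ m = w) ∨ (d = u ∧ ∃ t, m = 2^t * w) := by
  have hw0 : 0 < w := hw.pos
  have hu0 : 0 < u := hu.pos
  rcases le_or_gt 0 a with ha | ha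
  · left
    have key := (qdiv_eq hm hw0 h).1 ha
    -- d * w = 2^k * u * m
    have hmw : m ∣ w := by
      have h1 : m ∣ w * d := ⟨2^(a.toNat) * u, by rw [Nat.mul_comm w d, key]; ring⟩
      exact Nat.Coprime.dvd_of_dvd_mul_right (Nat.coprime_comm.mp hdm) h1
    have hwm : w ∣ m := by
      have h1 : w ∣ (2^(a.toNat) * u) * m := ⟨d, by rw [← key]; ring⟩
      have h2 : w.Coprime (2^(a.toNat) * u) :=
        Nat.Coprime.mul_right (coprime_two_pow_of_odd hw _) (Nat.coprime_comm.mp huw)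
      exact Nat.Coprime.dvd_of_dvd_mul_left h2 h1
    have hme : m = w := Nat.dvd_antisymm hmw hwm
    subst hme
    refine ⟨a.toNat, ?_, rfl⟩
    have : d * m = (2^(a.toNat) * u) * m := key.trans (by ring)
    exact Nat.eq_of_mul_eq_mul_right hm this
  · right
    have key := (qdiv_eq hm hw0 h).2 ha.le
    -- 2^b * d * w = u * m
    have hud : u ∣ d := by
      have h1 : u ∣ (2^((-a).toNat) * w) * d := ⟨m, by rw [← key]; ring⟩
      have h2 : u.Coprime (2^((-a).toNat) * w) :=
        Nat.Coprime.mul_right (coprime_two_pow_of_odd hu _) huw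
      exact Nat.Coprime.dvd_of_dvd_mul_left h2 h1
    have hdu : d ∣ u := by
      have h1 : d ∣ u * m := ⟨2^((-a).toNat) * w, by rw [← key]; ring⟩
      exact Nat.Coprime.dvd_of_dvd_mul_right hdm h1
    have hde : d = u := Nat.dvd_antisymm hdu hud
    subst hde
    refine ⟨rfl, (-a).toNat, ?_⟩
    have : d * (2^((-a).toNat) * w) = d * m := by rw [← key]; ring
    exact (Nat.eq_of_mul_eq_mul_left hd this).symm

lemma kepler_eval {q : ℚ} {h : 0 < q} {m n : ℕ} (hrep : rep (cls q h) = (m, n))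
    (hm : 0 < m) (hmn : m < n) {q' : ℚ} (h' : 0 < q')
    (hval : ((n:ℚ) - (m:ℚ))/(m:ℚ) = q') : kepler (cls q h) = cls q' h' := by
  obtain ⟨hp, hk⟩ := kepler_of hrep hm hmn
  rw [hk]
  exact cls_congr _ _ hval

lemma ne_octave_of_rep {q : ℚ} {h : 0 < q} {m n : ℕ}
    (hrep : rep (cls q h) = (m, n)) (hn : n ≠ 2) : cls q h ≠ octave := by
  intro he
  apply hn
  have : nVal (cls q h) = n := by rw [nVal, hrep]
  rw [← this]
  exact nVal_eq_two_iff.mpr he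

-- representatives
lemma rep56 : rep (cls (5/6) (by norm_num)) = (5, 6) :=
  rep_of (by norm_num) (by norm_num) (by norm_num) (by norm_num)
lemma rep45 : rep (cls (4/5) (by norm_num)) = (4, 5) :=
  rep_of (by norm_num) (by norm_num) (by norm_num) (by norm_num)
lemma rep34 : rep (cls (3/4) (by norm_num)) = (3, 4) :=
  rep_of (by norm_num) (by norm_num) (by norm_num) (by norm_num)
lemma rep23 : rep (cls (2/3) (by norm_num)) = (2, 3) :=
  rep_of (by norm_num) (by norm_num) (by norm_num) (by norm_num)
lemma rep58 : rep (cls (5/8) (by norm_num)) = (5, 8) :=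
  rep_of (by norm_num) (by norm_num) (by norm_num) (by norm_num)
lemma rep35 : rep (cls (3/5) (by norm_num)) = (3, 5) :=
  rep_of (by norm_num) (by norm_num) (by norm_num) (by norm_num)
lemma rep12 : rep octave = (1, 2) :=
  rep_of (by norm_num) (by norm_num) (by norm_num) (by norm_num)

-- octave identifications
lemma octave_eq_cls12 : octave = cls (1/2) (by norm_num) := rfl

lemma kepler56 : kepler (cls (5/6) (by norm_num)) = cls (4/5) (by norm_num) := by
  have h1 : kepler (cls (5/6) (by norm_num)) = cls (1/5) (by norm_num) :=
    kepler_eval rep56 (by norm_num) (by norm_num) _ (by norm_num)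
  rw [h1]
  exact (cls_eq_cls_iff _ _).mpr ⟨-2, by norm_num⟩

lemma kepler45 : kepler (cls (4/5) (by norm_num)) = octave := by
  have h1 : kepler (cls (4/5) (by norm_num)) = cls (1/4) (by norm_num) :=
    kepler_eval rep45 (by norm_num) (by norm_num) _ (by norm_num)
  rw [h1, octave_eq_cls12]
  exact (cls_eq_cls_iff _ _).mpr ⟨-1, by norm_num⟩

lemma kepler34 : kepler (cls (3/4) (by norm_num)) = cls (2/3) (by norm_num) := by
  have h1 : kepler (cls (3/4) (by norm_num)) = cls (1/3) (by norm_num) :=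
    kepler_eval rep34 (by norm_num) (by norm_num) _ (by norm_num)
  rw [h1]
  exact (cls_eq_cls_iff _ _).mpr ⟨-1, by norm_num⟩

lemma kepler23 : kepler (cls (2/3) (by norm_num)) = octave := by
  have h1 : kepler (cls (2/3) (by norm_num)) = cls (1/2) (by norm_num) :=
    kepler_eval rep23 (by norm_num) (by norm_num) _ (by norm_num)
  rw [h1, octave_eq_cls12]

lemma kepler58 : kepler (cls (5/8) (by norm_num)) = cls (3/5) (by norm_num) :=
  kepler_eval rep58 (by norm_num) (by norm_num) _ (by norm_num)

lemma kepler35 : kepler (cls (3/5) (by norm_num)) = cls (2/3) (by norm_num) :=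
  kepler_eval rep35 (by norm_num) (by norm_num) _ (by norm_num)

-- Euclidean numbers
lemma euclid2 : IsEuclidean 2 := ⟨by norm_num, 1, 0, 0, Or.inl rfl, Or.inl rfl, by norm_num⟩
lemma euclid3 : IsEuclidean 3 := ⟨by norm_num, 0, 1, 0, Or.inr rfl, Or.inl rfl, by norm_num⟩
lemma euclid4 : IsEuclidean 4 := ⟨by norm_num, 2, 0, 0, Or.inl rfl, Or.inl rfl, by norm_num⟩
lemma euclid5 : IsEuclidean 5 := ⟨by norm_num, 0, 0, 1, Or.inl rfl, Or.inr rfl, by norm_num⟩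
lemma euclid6 : IsEuclidean 6 := ⟨by norm_num, 1, 1, 0, Or.inr rfl, Or.inl rfl, by norm_num⟩
lemma euclid8 : IsEuclidean 8 := ⟨by norm_num, 3, 0, 0, Or.inl rfl, Or.inl rfl, by norm_num⟩

lemma nVal_of_rep {q : ℚ} {h : 0 < q} {m n : ℕ} (hrep : rep (cls q h) = (m, n)) :
    nVal (cls q h) = n := by rw [nVal, hrep]

lemma consonant_octave : EuclideanConsonant octave := by
  intro j hj
  rw [height_octave] at hj
  interval_cases j
  rw [Function.iterate_zero_apply, nVal, rep12]
  exact euclid2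

lemma consonant23 : EuclideanConsonant (cls (2/3) (by norm_num)) := by
  rw [consonant_iff (ne_octave_of_rep rep23 (by norm_num)), nVal_of_rep rep23, kepler23]
  exact ⟨euclid3, consonant_octave⟩

lemma consonant45 : EuclideanConsonant (cls (4/5) (by norm_num)) := by
  rw [consonant_iff (ne_octave_of_rep rep45 (by norm_num)), nVal_of_rep rep45, kepler45]
  exact ⟨euclid5, consonant_octave⟩

lemma consonant34 : EuclideanConsonant (cls (3/4) (by norm_num)) := by
  rw [consonant_iff (ne_octave_of_rep rep34 (by norm_num)), nVal_of_rep rep34, kepler34]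
  exact ⟨euclid4, consonant23⟩

lemma consonant35 : EuclideanConsonant (cls (3/5) (by norm_num)) := by
  rw [consonant_iff (ne_octave_of_rep rep35 (by norm_num)), nVal_of_rep rep35, kepler35]
  exact ⟨euclid5, consonant23⟩

lemma consonant56 : EuclideanConsonant (cls (5/6) (by norm_num)) := by
  rw [consonant_iff (ne_octave_of_rep rep56 (by norm_num)), nVal_of_rep rep56, kepler56]
  exact ⟨euclid6, consonant45⟩

lemma consonant58 : EuclideanConsonant (cls (5/8) (by norm_num)) := by
  rw [consonant_iff (ne_octave_of_rep rep58 (by norm_num)), nVal_of_rep rep58, kepler58]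
  exact ⟨euclid8, consonant35⟩

lemma euclid_odd {n : ℕ} (h : IsEuclidean n) (ho : ¬ 2 ∣ n) :
    n = 3 ∨ n = 5 ∨ n = 15 := by
  obtain ⟨h1, k, l, m, hl, hm, rfl⟩ := h
  have hk : k = 0 := by
    by_contra hk
    exact ho (Dvd.dvd.mul_right (Dvd.dvd.mul_right (dvd_pow_self 2 hk) _) _)
  subst hk
  rcases hl with rfl | rfl <;> rcases hm with rfl | rfl <;> simp_all <;> omega

lemma two_dvd_pow (t : ℕ) : 2^t = 1 ∨ 2 ∣ 2^t := by
  rcases t with _ | t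
  · left; rfl
  · right; exact dvd_pow_self 2 (Nat.succ_ne_zero t)

lemma pow2_lt16 {t : ℕ} (h : 2^t < 16) : t < 4 := by
  by_contra hc
  push_neg at hc
  have : 2^4 ≤ 2^t := Nat.pow_le_pow_right (by norm_num) hc
  omega

lemma sigma_eq {σ : MusInt} {m n : ℕ} (hm : mVal σ = m) (hn : nVal σ = n)
    {q : ℚ} (hq : 0 < q) (hval : (m:ℚ)/(n:ℚ) = q) : σ = cls q hq := by
  obtain ⟨_, _, _, _, hpos, hcls⟩ := rep_prop σ
  rw [hcls]
  apply cls_congr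
  rw [show mVal σ = m from hm, show nVal σ = n from hn] at *
  exact hval

lemma consonant_cases {σ : MusInt} (h : EuclideanConsonant σ) :
    σ = cls (5/6) (by norm_num) ∨ σ = cls (4/5) (by norm_num) ∨
    σ = cls (3/4) (by norm_num) ∨ σ = cls (2/3) (by norm_num) ∨
    σ = cls (5/8) (by norm_num) ∨ σ = cls (3/5) (by norm_num) ∨ σ = octave := by
  generalize hN : nVal σ = N
  induction N using Nat.strong_induction_on generalizing σ with
  | _ N ih =>
  subst hN
  by_cases hσ : σ = octave
  · exact Or.inr (Or.inr (Or.inr (Or.inr (Or.inr (Or.inr hσ)))))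
  obtain ⟨d, m, hp, hk, hd, hdm, hgcd, hn, hm⟩ := kepler_form hσ
  obtain ⟨hEn, hKcons⟩ := (consonant_iff hσ).mp h
  have hE' : IsEuclidean (d + m) := hn ▸ hEn
  have hih := ih (nVal (kepler σ)) (nVal_kepler_lt hσ) hKcons rfl
  have h2ne : (2:ℚ) ≠ 0 := by norm_num
  rcases hih with hcase | hcase | hcase | hcase | hcase | hcase | hcase
  · -- K σ = [5/6] : impossible
    obtain ⟨a, ha⟩ := (cls_eq_cls_iff _ _).mp (hk.symm.trans hcase)
    have hq : (5/6 : ℚ) = 2^(-1:ℤ) * (((5:ℕ):ℚ)/((3:ℕ):ℚ)) := by push_cast; norm_num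
    rw [hq, ← mul_assoc, ← zpow_add₀ h2ne] at ha
    rcases nt_lemma (by decide) (by decide) (by decide) hgcd hd (by omega) ha with
      ⟨s, hds, hmw⟩ | ⟨hdu, t, hmt⟩
    · have hps : 0 < 2^s := pow_pos (by norm_num) s
      exfalso; omega
    · have hpt : 0 < 2^t := pow_pos (by norm_num) t
      rcases two_dvd_pow t with h1 | h1
      · exfalso; omega
      · have h35 := euclid_odd hE' (by omega)
        exfalso; omega
  · -- K σ = [4/5] : σ = [5/6] or impossible
    obtain ⟨a, ha⟩ := (cls_eq_cls_iff _ _).mp (hk.symm.trans hcase)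
    have hq : (4/5 : ℚ) = 2^(2:ℤ) * (((1:ℕ):ℚ)/((5:ℕ):ℚ)) := by push_cast; norm_num
    rw [hq, ← mul_assoc, ← zpow_add₀ h2ne] at ha
    rcases nt_lemma (by decide) (by decide) (by decide) hgcd hd (by omega) ha with
      ⟨s, hds, hmw⟩ | ⟨hdu, t, hmt⟩
    · have hps : 0 < 2^s := pow_pos (by norm_num) s
      have hs4 : s < 4 := pow2_lt16 (by omega)
      interval_cases s <;> norm_num at hds
      · exact Or.inl (sigma_eq (m := 5) (n := 6) (by omega) (by omega) (by norm_num)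
          (by norm_num))
      · have h7 := euclid_odd hE' (by omega); exfalso; omega
      · have h9 := euclid_odd hE' (by omega); exfalso; omega
      · exfalso; omega
    · have hpt : 0 < 2^t := pow_pos (by norm_num) t
      rcases two_dvd_pow t with h1 | h1
      · exact Or.inl (sigma_eq (m := 5) (n := 6) (by omega) (by omega) (by norm_num)
          (by norm_num))
      · have h35 := euclid_odd hE' (by omega)
        exfalso; omega
  · -- K σ = [3/4] : impossible
    obtain ⟨a, ha⟩ := (cls_eq_cls_iff _ _).mp (hk.symm.trans hcase)
    have hq : (3/4 : ℚ) = 2^(-2:ℤ) * (((3:ℕ):ℚ)/((1:ℕ):ℚ)) := by push_cast; norm_num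
    rw [hq, ← mul_assoc, ← zpow_add₀ h2ne] at ha
    rcases nt_lemma (by decide) (by decide) (by decide) hgcd hd (by omega) ha with
      ⟨s, hds, hmw⟩ | ⟨hdu, t, hmt⟩
    · have hps : 0 < 2^s := pow_pos (by norm_num) s
      exfalso; omega
    · have hpt : 0 < 2^t := pow_pos (by norm_num) t
      rcases two_dvd_pow t with h1 | h1
      · exfalso; omega
      · have h35 := euclid_odd hE' (by omega)
        have ht4 : t < 4 := pow2_lt16 (by omega)
        interval_cases t <;> norm_num at hmt <;> exfalso <;> omega
  · -- K σ = [2/3] : σ = [3/4] or [3/5]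
    obtain ⟨a, ha⟩ := (cls_eq_cls_iff _ _).mp (hk.symm.trans hcase)
    have hq : (2/3 : ℚ) = 2^(1:ℤ) * (((1:ℕ):ℚ)/((3:ℕ):ℚ)) := by push_cast; norm_num
    rw [hq, ← mul_assoc, ← zpow_add₀ h2ne] at ha
    rcases nt_lemma (by decide) (by decide) (by decide) hgcd hd (by omega) ha with
      ⟨s, hds, hmw⟩ | ⟨hdu, t, hmt⟩
    · have hps : 0 < 2^s := pow_pos (by norm_num) s
      have hs4 : s < 4 := pow2_lt16 (by omega)
      interval_cases s <;> norm_num at hds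
      · exact Or.inr (Or.inr (Or.inl (sigma_eq (m := 3) (n := 4) (by omega) (by omega)
          (by norm_num) (by norm_num))))
      · exact Or.inr (Or.inr (Or.inr (Or.inr (Or.inr (Or.inl (sigma_eq (m := 3) (n := 5)
          (by omega) (by omega) (by norm_num) (by norm_num)))))))
      · exfalso; omega
      · exfalso; omega
    · have hpt : 0 < 2^t := pow_pos (by norm_num) t
      rcases two_dvd_pow t with h1 | h1
      · exact Or.inr (Or.inr (Or.inl (sigma_eq (m := 3) (n := 4) (by omega) (by omega)
          (by norm_num) (by norm_num))))
      · have h35 := euclid_odd hE' (by omega)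
        exfalso; omega
  · -- K σ = [5/8] : impossible
    obtain ⟨a, ha⟩ := (cls_eq_cls_iff _ _).mp (hk.symm.trans hcase)
    have hq : (5/8 : ℚ) = 2^(-3:ℤ) * (((5:ℕ):ℚ)/((1:ℕ):ℚ)) := by push_cast; norm_num
    rw [hq, ← mul_assoc, ← zpow_add₀ h2ne] at ha
    rcases nt_lemma (by decide) (by decide) (by decide) hgcd hd (by omega) ha with
      ⟨s, hds, hmw⟩ | ⟨hdu, t, hmt⟩
    · have hps : 0 < 2^s := pow_pos (by norm_num) s
      exfalso; omega
    · have hpt : 0 < 2^t := pow_pos (by norm_num) t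
      rcases two_dvd_pow t with h1 | h1
      · exfalso; omega
      · have h35 := euclid_odd hE' (by omega)
        have ht4 : t < 4 := pow2_lt16 (by omega)
        interval_cases t <;> norm_num at hmt <;> exfalso <;> omega
  · -- K σ = [3/5] : σ = [5/8]
    obtain ⟨a, ha⟩ := (cls_eq_cls_iff _ _).mp (hk.symm.trans hcase)
    have hq : (3/5 : ℚ) = 2^(0:ℤ) * (((3:ℕ):ℚ)/((5:ℕ):ℚ)) := by push_cast; norm_num
    rw [hq, ← mul_assoc, ← zpow_add₀ h2ne] at ha
    rcases nt_lemma (by decide) (by decide) (by decide) hgcd hd (by omega) ha with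
      ⟨s, hds, hmw⟩ | ⟨hdu, t, hmt⟩
    · have hps : 0 < 2^s := pow_pos (by norm_num) s
      have hs1 : 2^s = 1 := by omega
      exact Or.inr (Or.inr (Or.inr (Or.inr (Or.inl (sigma_eq (m := 5) (n := 8) (by omega)
        (by omega) (by norm_num) (by norm_num))))))
    · have hpt : 0 < 2^t := pow_pos (by norm_num) t
      rcases two_dvd_pow t with h1 | h1
      · exact Or.inr (Or.inr (Or.inr (Or.inr (Or.inl (sigma_eq (m := 5) (n := 8) (by omega)
          (by omega) (by norm_num) (by norm_num))))))
      · have h35 := euclid_odd hE' (by omega)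
        exfalso; omega
  · -- K σ = octave : σ = [2/3] or [4/5]
    rw [octave_eq_cls12] at hcase
    obtain ⟨a, ha⟩ := (cls_eq_cls_iff _ _).mp (hk.symm.trans hcase)
    have hq : (1/2 : ℚ) = 2^(-1:ℤ) * (((1:ℕ):ℚ)/((1:ℕ):ℚ)) := by push_cast; norm_num
    rw [hq, ← mul_assoc, ← zpow_add₀ h2ne] at ha
    rcases nt_lemma (by decide) (by decide) (by decide) hgcd hd (by omega) ha with
      ⟨s, hds, hmw⟩ | ⟨hdu, t, hmt⟩
    · have hps : 0 < 2^s := pow_pos (by norm_num) s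
      exfalso; omega
    · have hpt : 0 < 2^t := pow_pos (by norm_num) t
      rcases two_dvd_pow t with h1 | h1
      · exfalso; omega
      · have h35 := euclid_odd hE' (by omega)
        have ht4 : t < 4 := pow2_lt16 (by omega)
        interval_cases t <;> norm_num at hmt
        · exfalso; omega
        · exact Or.inr (Or.inr (Or.inr (Or.inl (sigma_eq (m := 2) (n := 3) (by omega)
            (by omega) (by norm_num) (by norm_num)))))
        · exact Or.inr (Or.inl (sigma_eq (m := 4) (n := 5) (by omega) (by omega)
            (by norm_num) (by norm_num)))
        · exfalso; omega

/-- there are precisely seven Euclidean consonants: the minor third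
`[5/6]`, major third `[4/5]`, fourth `[3/4]`, fifth `[2/3]`, minor sixth `[5/8]`,
major sixth `[3/5]`, and the octave `[1/2]`. -/
theorem euclidean_consonants :
    {σ : MusInt | EuclideanConsonant σ} =
      {cls (5/6) (by norm_num), cls (4/5) (by norm_num), cls (3/4) (by norm_num),
       cls (2/3) (by norm_num), cls (5/8) (by norm_num), cls (3/5) (by norm_num),
       cls (1/2) (by norm_num)} := by
  ext σ
  simp only [Set.mem_setOf_eq, Set.mem_insert_iff, Set.mem_singleton_iff]
  constructor
  · intro h
    rcases consonant_cases h with h1 | h1 | h1 | h1 | h1 | h1 | h1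
    · exact Or.inl h1
    · exact Or.inr (Or.inl h1)
    · exact Or.inr (Or.inr (Or.inl h1))
    · exact Or.inr (Or.inr (Or.inr (Or.inl h1)))
    · exact Or.inr (Or.inr (Or.inr (Or.inr (Or.inl h1))))
    · exact Or.inr (Or.inr (Or.inr (Or.inr (Or.inr (Or.inl h1)))))
    · exact Or.inr (Or.inr (Or.inr (Or.inr (Or.inr (Or.inr (octave_eq_cls12 ▸ h1))))))
  · intro h
    rcases h with h1 | h1 | h1 | h1 | h1 | h1 | h1 <;> subst h1
    · exact consonant56
    · exact consonant45
    · exact consonant34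
    · exact consonant23
    · exact consonant58
    · exact consonant35
    · exact octave_eq_cls12 ▸ consonant_octave
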